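/- For every even integer m ≥ 4, the graph obtained from the cycle C_m by adding two new vertices x and y, with x and y nonadjacent to each other and each adjacent to all m cycle vertices, is a Hamiltonian, Eulerian (all degrees even) graph on m + 2 vertices with exactly 3m = 3(m+2) − 6 edges that is triangle decomposable. -/

import Mathlib

/-- A triangle on three distinct vertices, as a multiset of edges. -/
def IsTriangle {V : Type*} (t : Multiset (Sym2 V)) : Prop :=
  ∃ a b c : V, a ≠ b ∧ b ≠ c ∧ a ≠ c ∧ t = {s(a, b), s(b, c), s(a, c)}

/-- A multigraph (multiset of edges) is triangle decomposable if it is a sum of triangles. -/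
def TriDecomp {V : Type*} (E : Multiset (Sym2 V)) : Prop :=
  ∃ T : Multiset (Multiset (Sym2 V)), (∀ t ∈ T, IsTriangle t) ∧ T.sum = E

/-- The edge multiset of a simple graph on a finite vertex type. -/
noncomputable def edgeMS {V : Type*} [Fintype V] (G : SimpleGraph V) : Multiset (Sym2 V) :=
  G.edgeSet.toFinite.toFinset.val

/-- `ε_Δ(G)`: the least number of duplicated edges of `G` (a multiset of edges of `G`,
repetitions allowed) whose addition makes the edge multiset triangle decomposable. -/
noncomputable def epsDelta {V : Type*} [Fintype V] (G : SimpleGraph V) : ℕ :=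
  sInf {k | ∃ D : Multiset (Sym2 V), D.card = k ∧ (∀ e ∈ D, e ∈ G.edgeSet) ∧
    TriDecomp (edgeMS G + D)}

/-- The cyclic successor on `Fin m`. -/
def nextFin {m : ℕ} (hm : 0 < m) (i : Fin m) : Fin m :=
  ⟨((i : ℕ) + 1) % m, Nat.mod_lt _ hm⟩

/-- The graph obtained from the cycle `C_m` (on the `Sum.inl` vertices) by adding two new
mutually nonadjacent vertices (the `Sum.inr` vertices), each adjacent to all `m` cycle
vertices. -/
def doubleWheel (m : ℕ) (hm : 0 < m) : SimpleGraph (Fin m ⊕ Fin 2) :=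
  SimpleGraph.fromEdgeSet
    ({e | ∃ i : Fin m, e = s(Sum.inl i, Sum.inl (nextFin hm i))} ∪
     {e | ∃ (i : Fin m) (j : Fin 2), e = s(Sum.inl i, Sum.inr j)})

-- nat helpers
lemma natA {m a : ℕ} (h2 : 2 ≤ m) (ha : a < m) : (a+1) % m ≠ a := by
  rcases Nat.lt_or_ge (a+1) m with h | h
  · rw [Nat.mod_eq_of_lt h]; omega
  · have : a + 1 = m := by omega
    rw [this, Nat.mod_self]; omega

lemma natD {m a b : ℕ} (ha : a < m) (hb : b < m) (h : (a+1) % m = (b+1) % m) : a = b := by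
  rcases Nat.lt_or_ge (a+1) m with h1 | h1 <;> rcases Nat.lt_or_ge (b+1) m with h2 | h2
  · rw [Nat.mod_eq_of_lt h1, Nat.mod_eq_of_lt h2] at h; omega
  · have : b + 1 = m := by omega
    rw [Nat.mod_eq_of_lt h1, this, Nat.mod_self] at h; omega
  · have : a + 1 = m := by omega
    rw [this, Nat.mod_self, Nat.mod_eq_of_lt h2] at h; omega
  · omega

lemma natE {m a b : ℕ} (h3 : 3 ≤ m) (ha : a < m) (hb : b < m)
    (h : (a+1) % m = b) (h' : (b+1) % m = a) : False := by
  rcases Nat.lt_or_ge (a+1) m with h1 | h1 <;> rcases Nat.lt_or_ge (b+1) m with h2 | h2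
  · rw [Nat.mod_eq_of_lt h1] at h; rw [Nat.mod_eq_of_lt h2] at h'; omega
  · rw [Nat.mod_eq_of_lt h1] at h
    have : b + 1 = m := by omega
    rw [this, Nat.mod_self] at h'; omega
  · have : a + 1 = m := by omega
    rw [this, Nat.mod_self] at h; rw [Nat.mod_eq_of_lt h2] at h'; omega
  · have h1' : a + 1 = m := by omega
    rw [h1', Nat.mod_self] at h
    omega

lemma natF {m a : ℕ} (hme : Even m) (hm : 0 < m) (ha : a < m) :
    ((a+1) % m) % 2 ≠ a % 2 := by
  obtain ⟨t, rfl⟩ := hme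
  rcases Nat.lt_or_ge (a+1) (t+t) with h1 | h1
  · rw [Nat.mod_eq_of_lt h1]; omega
  · have : a + 1 = t + t := by omega
    rw [this, Nat.mod_self]; omega

lemma natB {m i : ℕ} (hm : 0 < m) (hi : i < m) : ((i + (m-1)) % m + 1) % m = i := by
  rw [Nat.mod_add_mod]
  have : i + (m-1) + 1 = i + m := by omega
  rw [this, Nat.add_mod_right, Nat.mod_eq_of_lt hi]

lemma natC {m k i : ℕ} (hm : 0 < m) (hk : k < m) (hi : i < m) (h : (k+1) % m = i) :
    (i + (m-1)) % m = k := by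
  rcases Nat.lt_or_ge (k+1) m with h1 | h1
  · rw [Nat.mod_eq_of_lt h1] at h
    subst h
    have : k + 1 + (m-1) = k + m := by omega
    rw [this, Nat.add_mod_right, Nat.mod_eq_of_lt hk]
  · have hkm : k + 1 = m := by omega
    rw [hkm, Nat.mod_self] at h
    subst h
    rw [Nat.zero_add, Nat.mod_eq_of_lt (by omega)]
    omega

lemma natG {m i : ℕ} (h4 : 4 ≤ m) (hi : i < m) : (i+1) % m ≠ (i + (m-1)) % m := by
  intro h
  rcases Nat.lt_or_ge (i+1) m with h1 | h1 <;> rcases Nat.lt_or_ge (i + (m-1)) m with h2 | h2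
  · rw [Nat.mod_eq_of_lt h1, Nat.mod_eq_of_lt h2] at h; omega
  · rw [Nat.mod_eq_of_lt h1] at h
    have : i + (m-1) - m < m := by omega
    rw [show i + (m-1) = (i + (m-1) - m) + m by omega, Nat.add_mod_right,
      Nat.mod_eq_of_lt this] at h
    omega
  · have : i + 1 = m := by omega
    rw [this, Nat.mod_self, Nat.mod_eq_of_lt h2] at h; omega
  · have : i + 1 = m := by omega
    have h2' : i + (m-1) - m < m := by omega
    rw [this, Nat.mod_self, show i + (m-1) = (i + (m-1) - m) + m by omega,
      Nat.add_mod_right, Nat.mod_eq_of_lt h2'] at h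
    omega

-- adjacency
lemma dw_adj {m : ℕ} (hm0 : 0 < m) (u v : Fin m ⊕ Fin 2) :
    (doubleWheel m hm0).Adj u v ↔
      ((∃ i, s(u,v) = s(Sum.inl i, Sum.inl (nextFin hm0 i))) ∨
        ∃ i j, s(u,v) = s(Sum.inl i, Sum.inr j)) ∧ u ≠ v := by
  rw [doubleWheel, SimpleGraph.fromEdgeSet_adj]
  rfl

lemma adj_spoke {m : ℕ} (hm0 : 0 < m) (i : Fin m) (j : Fin 2) :
    (doubleWheel m hm0).Adj (Sum.inl i) (Sum.inr j) := by
  rw [dw_adj]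
  exact ⟨Or.inr ⟨i, j, rfl⟩, by simp⟩

lemma adj_cyc {m : ℕ} (hm0 : 0 < m) (h2 : 2 ≤ m) (i : Fin m) :
    (doubleWheel m hm0).Adj (Sum.inl i) (Sum.inl (nextFin hm0 i)) := by
  rw [dw_adj]
  refine ⟨Or.inl ⟨i, rfl⟩, ?_⟩
  simp only [ne_eq, Sum.inl.injEq]
  intro h
  exact natA h2 i.isLt (congrArg Fin.val h.symm)

def gv {m : ℕ} (hm0 : 0 < m) (j : ℕ) : Fin m ⊕ Fin 2 := Sum.inl ⟨j % m, Nat.mod_lt _ hm0⟩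

lemma gv_adj {m : ℕ} (hm0 : 0 < m) (h2 : 2 ≤ m) (j : ℕ) :
    (doubleWheel m hm0).Adj (gv hm0 j) (gv hm0 (j+1)) := by
  have h : gv hm0 (j+1) = Sum.inl (nextFin hm0 ⟨j % m, Nat.mod_lt _ hm0⟩) := by
    simp only [gv, Sum.inl.injEq, nextFin]
    exact Fin.ext (by simp [Nat.mod_add_mod])
  rw [h]
  exact adj_cyc hm0 h2 _

def walkSeg {m : ℕ} (hm0 : 0 < m) (h2 : 2 ≤ m) :
    (n k : ℕ) → (doubleWheel m hm0).Walk (gv hm0 k) (gv hm0 (k+n))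
  | 0, _ => SimpleGraph.Walk.nil
  | n+1, k =>
    SimpleGraph.Walk.cons (gv_adj hm0 h2 k)
      ((walkSeg hm0 h2 n (k+1)).copy rfl (congrArg (gv hm0) (by omega)))

lemma walkSeg_support {m : ℕ} (hm0 : 0 < m) (h2 : 2 ≤ m) (n k : ℕ) :
    (walkSeg hm0 h2 n k).support = (List.range (n+1)).map (fun t => gv hm0 (k+t)) := by
  induction n generalizing k with
  | zero => 
    show [gv hm0 k] = _
    rw [List.range_succ_eq_map, List.range_zero]
    simp
  | succ n ih =>
    rw [walkSeg, SimpleGraph.Walk.support_cons, SimpleGraph.Walk.support_copy, ih]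
    conv_rhs => rw [List.range_succ_eq_map]
    rw [List.map_cons, List.map_map]
    refine congrArg₂ _ rfl (List.map_congr_left fun t _ => ?_)
    simp only [Function.comp_apply]
    congr 1
    omega

lemma walkSeg_edges {m : ℕ} (hm0 : 0 < m) (h2 : 2 ≤ m) (n k : ℕ) :
    ∀ e ∈ (walkSeg hm0 h2 n k).edges, ∃ a b : Fin m, e = s(Sum.inl a, Sum.inl b) := by
  induction n generalizing k with
  | zero => simp [walkSeg]
  | succ n ih =>
    rw [walkSeg, SimpleGraph.Walk.edges_cons, SimpleGraph.Walk.edges_copy]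
    intro e he
    rcases List.mem_cons.mp he with rfl | he
    · exact ⟨_, _, rfl⟩
    · exact ih (k+1) e he

open SimpleGraph Walk in
lemma dw_ham {m : ℕ} (hm0 : 0 < m) (hm4 : 4 ≤ m) : (doubleWheel m hm0).IsHamiltonian := by
  intro _
  have h2 : 2 ≤ m := by omega
  have hgv_inj : ∀ a b : ℕ, a < m → b < m → gv hm0 a = gv hm0 b → a = b := by
    intro a b ha hb h
    simp only [gv, Sum.inl.injEq, Fin.mk.injEq, Nat.mod_eq_of_lt ha, Nat.mod_eq_of_lt hb] at h
    exact h
  -- the walk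
  let W : (doubleWheel m hm0).Walk (gv hm0 1) (gv hm0 (m-1)) :=
    (walkSeg hm0 h2 (m-2) 1).copy rfl (congrArg (gv hm0) (by omega))
  let Q : (doubleWheel m hm0).Walk (gv hm0 (m-1)) (gv hm0 0) :=
    Walk.cons (show (doubleWheel m hm0).Adj (gv hm0 (m-1)) (Sum.inr 1) from adj_spoke hm0 _ 1)
      (Walk.cons (show (doubleWheel m hm0).Adj (Sum.inr 1) (gv hm0 0) from (adj_spoke hm0 _ 1).symm) Walk.nil)
  let p : (doubleWheel m hm0).Walk (Sum.inr 0) (gv hm0 0) :=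
    Walk.cons (show (doubleWheel m hm0).Adj (Sum.inr 0) (gv hm0 1) from (adj_spoke hm0 _ 0).symm) (W.append Q)
  have hWsup : W.support = (List.range (m-1)).map (fun t => gv hm0 (1+t)) := by
    rw [Walk.support_copy, walkSeg_support]
    congr 2
    omega
  have hpsup : p.support =
      Sum.inr 0 :: ((List.range (m-1)).map (fun t => gv hm0 (1+t)) ++ [Sum.inr 1, gv hm0 0]) := by
    simp only [p, Q, Walk.support_cons, Walk.support_append, hWsup, List.tail_cons,
      Walk.support_nil]
  have hnodup : p.support.Nodup := by
    rw [hpsup]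
    refine List.nodup_cons.mpr ⟨?_, ?_⟩
    · simp [gv]
    · rw [List.nodup_append]
      refine ⟨?_, ?_, ?_⟩
      · refine List.Nodup.map_on ?_ List.nodup_range
        intro x hx y hy hxy
        rw [List.mem_range] at hx hy
        have := hgv_inj (1+x) (1+y) (by omega) (by omega) hxy
        omega
      · simp [gv]
      · intro a ha b hb hab
        subst hab
        rw [List.mem_map] at ha
        obtain ⟨t, ht, rfl⟩ := ha
        rw [List.mem_range] at ht
        simp only [List.mem_cons, List.mem_singleton, List.not_mem_nil, or_false] at hb
        rcases hb with hb | hb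
        · simp [gv] at hb
        · have := hgv_inj (1+t) 0 (by omega) (by omega) hb
          omega
  have hmem : ∀ w, w ∈ p.support := by
    intro w
    rw [hpsup]
    rcases w with i | j
    · rcases eq_or_ne i.val 0 with h0 | h0
      · refine List.mem_cons_of_mem _ (List.mem_append_right _ ?_)
        simp only [List.mem_cons, List.mem_singleton]
        right; left
        simp only [gv]
        exact congrArg Sum.inl (Fin.ext (by show (i:ℕ) = 0 % m; rw [Nat.zero_mod]; omega))
      · refine List.mem_cons_of_mem _ (List.mem_append_left _ ?_)
        rw [List.mem_map]
        refine ⟨i.val - 1, List.mem_range.mpr (by omega), ?_⟩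
        simp only [gv]
        exact congrArg Sum.inl (Fin.ext (by
          simp only []
          rw [Nat.mod_eq_of_lt (by omega)]
          omega))
    · rcases j with ⟨jv, hj⟩
      interval_cases jv
      · exact List.mem_cons_self
      · refine List.mem_cons_of_mem _ (List.mem_append_right _ ?_)
        simp
  have hpath : p.IsPath := Walk.IsPath.mk' hnodup
  have hWedge : ∀ e ∈ W.edges, ∃ a b : Fin m, e = s(Sum.inl a, Sum.inl b) := by
    intro e he
    rw [Walk.edges_copy] at he
    exact walkSeg_edges _ _ _ _ e he
  have hedges : s(gv hm0 0, (Sum.inr 0 : Fin m ⊕ Fin 2)) ∉ p.edges := by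
    intro h
    simp only [p, Q, Walk.edges_cons, Walk.edges_append, Walk.edges_nil, List.mem_cons,
      List.mem_append, List.not_mem_nil, or_false] at h
    have h1m : 1 % m = 1 := Nat.mod_eq_of_lt (by omega)
    have hinr01 : (Sum.inr (0:Fin 2) : Fin m ⊕ Fin 2) ≠ Sum.inr 1 := by
      intro hx; injection hx with hx'; exact absurd hx' (by decide)
    rcases h with h | h | h | h
    · rw [Sym2.eq_iff] at h
      rcases h with ⟨h, -⟩ | ⟨h, -⟩
      · simp [gv] at h
      · simp only [gv, Sum.inl.injEq, Fin.mk.injEq, Nat.zero_mod, h1m] at h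
        omega
    · obtain ⟨a, b, hab⟩ := hWedge _ h
      rw [Sym2.eq_iff] at hab
      rcases hab with ⟨-, h⟩ | ⟨-, h⟩ <;> simp at h
    · rw [Sym2.eq_iff] at h
      rcases h with ⟨-, h⟩ | ⟨h, -⟩
      · exact hinr01 h
      · simp [gv] at h
    · rw [Sym2.eq_iff] at h
      rcases h with ⟨h, -⟩ | ⟨-, h⟩
      · simp [gv] at h
      · exact hinr01 h
  refine ⟨gv hm0 0, Walk.cons (show (doubleWheel m hm0).Adj (gv hm0 0) (Sum.inr 0) from adj_spoke hm0 _ 0) p, ?_⟩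
  rw [Walk.isHamiltonianCycle_iff_isCycle_and_support_count_tail_eq_one]
  constructor
  · rw [Walk.cons_isCycle_iff]
    exact ⟨hpath, hedges⟩
  · intro a
    rw [Walk.support_cons, List.tail_cons]
    exact hpath.isHamiltonian_of_mem hmem a

lemma nbr_inr {m : ℕ} (hm0 : 0 < m) (j : Fin 2) :
    (doubleWheel m hm0).neighborSet (Sum.inr j) = Set.range (Sum.inl : Fin m → Fin m ⊕ Fin 2) := by
  ext w
  simp only [SimpleGraph.mem_neighborSet, dw_adj, Set.mem_range]
  constructor
  · rintro ⟨h | h, hne⟩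
    · obtain ⟨i, hi⟩ := h
      rw [Sym2.eq_iff] at hi
      rcases hi with ⟨hi, -⟩ | ⟨hi, -⟩ <;> simp at hi
    · obtain ⟨i, j', hij⟩ := h
      rw [Sym2.eq_iff] at hij
      rcases hij with ⟨hi, -⟩ | ⟨-, hw⟩
      · simp at hi
      · exact ⟨i, hw.symm⟩
  · rintro ⟨i, rfl⟩
    exact ⟨Or.inr ⟨i, j, Sym2.eq_swap⟩, by simp⟩

def prevFin {m : ℕ} (hm : 0 < m) (i : Fin m) : Fin m :=
  ⟨((i : ℕ) + (m-1)) % m, Nat.mod_lt _ hm⟩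

lemma nbr_inl {m : ℕ} (hm0 : 0 < m) (hm4 : 4 ≤ m) (i : Fin m) :
    (doubleWheel m hm0).neighborSet (Sum.inl i) =
      {Sum.inl (nextFin hm0 i), Sum.inl (prevFin hm0 i), Sum.inr 0, Sum.inr 1} := by
  have h2 : 2 ≤ m := by omega
  ext w
  simp only [SimpleGraph.mem_neighborSet, Set.mem_insert_iff, Set.mem_singleton_iff]
  constructor
  · rw [dw_adj]
    rintro ⟨h | h, hne⟩
    · obtain ⟨k, hk⟩ := h
      rw [Sym2.eq_iff] at hk
      rcases hk with ⟨hik, hw⟩ | ⟨hik, hw⟩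
      · left
        rw [hw]
        injection hik with hik
        rw [hik]
      · right; left
        rw [hw]
        injection hik with hik
        have : prevFin hm0 i = k := Fin.ext (natC hm0 k.isLt i.isLt (congrArg Fin.val hik.symm))
        rw [this]
    · obtain ⟨k, j, hkj⟩ := h
      rw [Sym2.eq_iff] at hkj
      rcases hkj with ⟨-, hw⟩ | ⟨hik, -⟩
      · rcases j with ⟨jv, hj⟩
        interval_cases jv
        · right; right; left; exact hw
        · right; right; right; exact hw
      · simp at hik
  · rintro (rfl | rfl | rfl | rfl)
    · exact adj_cyc hm0 h2 i
    · have hn : nextFin hm0 (prevFin hm0 i) = i := Fin.ext (natB hm0 i.isLt)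
      have := (adj_cyc hm0 h2 (prevFin hm0 i)).symm
      rwa [hn] at this
    · exact adj_spoke hm0 i 0
    · exact adj_spoke hm0 i 1

lemma dw_even_deg {m : ℕ} (hm0 : 0 < m) (hm4 : 4 ≤ m) (hme : Even m)
    (v : Fin m ⊕ Fin 2) : Even (((doubleWheel m hm0).neighborSet v).ncard) := by
  rcases v with i | j
  · rw [nbr_inl hm0 hm4 i]
    have hne1 : (Sum.inl (nextFin hm0 i) : Fin m ⊕ Fin 2) ≠ Sum.inl (prevFin hm0 i) := by
      intro h
      injection h with h
      exact natG hm4 i.isLt (congrArg Fin.val h)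
    have hd : ((Sum.inr 0 : Fin m ⊕ Fin 2) : Fin m ⊕ Fin 2) ≠ Sum.inr 1 := by
      intro h; injection h with h; exact absurd h (by decide)
    rw [Set.ncard_insert_of_notMem (by simp [hne1]) (Set.toFinite _),
      Set.ncard_insert_of_notMem (by simp) (Set.toFinite _),
      Set.ncard_pair hd]
    exact ⟨2, rfl⟩
  · rw [nbr_inr hm0 j, ← Set.image_univ,
      Set.ncard_image_of_injective _ Sum.inl_injective, Set.ncard_univ,
      Nat.card_eq_fintype_card, Fintype.card_fin]
    exact hme

section EdgeMS
variable {m : ℕ} (hm0 : 0 < m)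

/-- cycle edge -/
def cycE (i : Fin m) : Sym2 (Fin m ⊕ Fin 2) := s(Sum.inl i, Sum.inl (nextFin hm0 i))
/-- spoke edge -/
def spkE (q : Fin m × Fin 2) : Sym2 (Fin m ⊕ Fin 2) := s(Sum.inl q.1, Sum.inr q.2)

lemma mem_edgeMS (h2 : 2 ≤ m) (e : Sym2 (Fin m ⊕ Fin 2)) :
    e ∈ edgeMS (doubleWheel m hm0) ↔ (∃ i, e = cycE hm0 i) ∨ ∃ q, e = spkE q := by
  rw [edgeMS, Finset.mem_val, Set.Finite.mem_toFinset]
  rw [show (doubleWheel m hm0).edgeSet = _ \ {e : Sym2 (Fin m ⊕ Fin 2) | e.IsDiag} from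
    SimpleGraph.edgeSet_fromEdgeSet _]
  constructor
  · rintro ⟨h | h, -⟩
    · obtain ⟨i, hi⟩ := h
      exact Or.inl ⟨i, hi⟩
    · obtain ⟨i, j, hij⟩ := h
      exact Or.inr ⟨(i, j), hij⟩
  · rintro (⟨i, rfl⟩ | ⟨q, rfl⟩)
    · refine ⟨Or.inl ⟨i, rfl⟩, ?_⟩
      simp only [Set.mem_setOf_eq, cycE, Sym2.mk_isDiag_iff, Sum.inl.injEq]
      intro h
      exact natA h2 i.isLt (congrArg Fin.val h.symm)
    · refine ⟨Or.inr ⟨q.1, q.2, rfl⟩, ?_⟩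
      simp [spkE, Sym2.mk_isDiag_iff]

lemma cycE_inj (h3 : 3 ≤ m) : Function.Injective (cycE hm0 (m := m)) := by
  intro a b h
  rw [cycE, cycE, Sym2.eq_iff] at h
  rcases h with ⟨h, -⟩ | ⟨h1, h2⟩
  · exact Sum.inl_injective h
  · exact (natE h3 a.isLt b.isLt
      (congrArg Fin.val (Sum.inl_injective h2))
      (congrArg Fin.val (Sum.inl_injective h1)).symm).elim

lemma spkE_inj : Function.Injective (spkE (m := m)) := by
  intro a b h
  rw [spkE, spkE, Sym2.eq_iff] at h
  rcases h with ⟨h1, h2⟩ | ⟨h1, -⟩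
  · exact Prod.ext (Sum.inl_injective h1) (Sum.inr_injective h2)
  · simp at h1

lemma cyc_ne_spk (i : Fin m) (q : Fin m × Fin 2) : cycE hm0 i ≠ spkE q := by
  intro h
  rw [cycE, spkE, Sym2.eq_iff] at h
  rcases h with ⟨-, h⟩ | ⟨h, -⟩ <;> simp at h

lemma edgeMS_nodup : (edgeMS (doubleWheel m hm0)).Nodup :=
  (Set.Finite.toFinset _).nodup

/-- the edge multiset decomposition -/
lemma edgeMS_eq (h3 : 3 ≤ m) :
    edgeMS (doubleWheel m hm0) =
      (Finset.univ.val.map (cycE hm0)) + (Finset.univ.val.map (spkE (m := m))) := by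
  have h2 : 2 ≤ m := by omega
  have hnd : ((Finset.univ.val.map (cycE hm0)) +
      (Finset.univ.val.map (spkE (m := m)))).Nodup := by
    rw [Multiset.nodup_add]
    refine ⟨Multiset.Nodup.map (cycE_inj hm0 h3) Finset.univ.nodup,
      Multiset.Nodup.map spkE_inj Finset.univ.nodup, ?_⟩
    rw [Multiset.disjoint_left]
    intro e he1 he2
    rw [Multiset.mem_map] at he1 he2
    obtain ⟨i, -, rfl⟩ := he1
    obtain ⟨q, -, hq⟩ := he2
    exact cyc_ne_spk hm0 i q hq.symm
  refine le_antisymm ?_ ?_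
  · refine (Multiset.le_iff_subset (edgeMS_nodup hm0)).mpr ?_
    intro e he
    rw [mem_edgeMS hm0 h2] at he
    rw [Multiset.mem_add, Multiset.mem_map, Multiset.mem_map]
    rcases he with ⟨i, rfl⟩ | ⟨q, rfl⟩
    · exact Or.inl ⟨i, Finset.mem_val.mpr (Finset.mem_univ _), rfl⟩
    · exact Or.inr ⟨q, Finset.mem_val.mpr (Finset.mem_univ _), rfl⟩
  · refine (Multiset.le_iff_subset hnd).mpr ?_
    intro e he
    rw [Multiset.mem_add, Multiset.mem_map, Multiset.mem_map] at he
    rw [mem_edgeMS hm0 h2]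
    rcases he with ⟨i, -, rfl⟩ | ⟨q, -, rfl⟩
    · exact Or.inl ⟨i, rfl⟩
    · exact Or.inr ⟨q, rfl⟩

lemma edgeMS_card (h3 : 3 ≤ m) : (edgeMS (doubleWheel m hm0)).card = 3 * m := by
  rw [edgeMS_eq hm0 h3, Multiset.card_add, Multiset.card_map, Multiset.card_map]
  show Finset.univ.card + Finset.univ.card = 3 * m
  rw [Finset.card_univ, Finset.card_univ, Fintype.card_fin, Fintype.card_prod,
    Fintype.card_fin, Fintype.card_fin]
  ring
end EdgeMS

section Tri
variable {m : ℕ} (hm0 : 0 < m)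

def parF (i : Fin m) : Fin 2 := ⟨(i : ℕ) % 2, Nat.mod_lt _ (by omega)⟩

def triM (i : Fin m) : Multiset (Sym2 (Fin m ⊕ Fin 2)) :=
  {cycE hm0 i, spkE (nextFin hm0 i, parF i), spkE (i, parF i)}

lemma triM_isTriangle (h2 : 2 ≤ m) (i : Fin m) : IsTriangle (triM hm0 i) := by
  refine ⟨Sum.inl i, Sum.inl (nextFin hm0 i), Sum.inr (parF i), ?_, ?_, ?_, rfl⟩
  · intro h
    exact natA h2 i.isLt (congrArg Fin.val (Sum.inl_injective h)).symm
  · simp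
  · simp

lemma pair_eq (hme : Even m) :
    Finset.univ.val.map (fun i : Fin m => (nextFin hm0 i, parF i)) +
      Finset.univ.val.map (fun i : Fin m => (i, parF i)) =
      (Finset.univ : Finset (Fin m × Fin 2)).val := by
  have hnd : (Finset.univ.val.map (fun i : Fin m => (nextFin hm0 i, parF i)) +
      Finset.univ.val.map (fun i : Fin m => (i, parF i))).Nodup := by
    rw [Multiset.nodup_add]
    refine ⟨Multiset.Nodup.map ?_ Finset.univ.nodup,
      Multiset.Nodup.map ?_ Finset.univ.nodup, ?_⟩
    · intro a b h
      have h1 := congrArg Prod.fst h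
      exact Fin.ext (natD a.isLt b.isLt (congrArg Fin.val h1))
    · intro a b h
      exact congrArg Prod.fst h
    · rw [Multiset.disjoint_left]
      intro q hq1 hq2
      rw [Multiset.mem_map] at hq1 hq2
      obtain ⟨a, -, rfl⟩ := hq1
      obtain ⟨b, -, hb⟩ := hq2
      rw [Prod.mk.injEq] at hb
      obtain ⟨h1, h2⟩ := hb
      have := congrArg Fin.val h2
      simp only [parF, h1, nextFin] at this
      exact natF hme hm0 a.isLt this
  apply Multiset.eq_of_le_of_card_le
    ((Multiset.le_iff_subset hnd).mpr fun x _ => Finset.mem_val.mpr (Finset.mem_univ x))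
  rw [Multiset.card_add, Multiset.card_map, Multiset.card_map]
  show Fintype.card (Fin m × Fin 2) ≤ Finset.univ.card + Finset.univ.card
  rw [Finset.card_univ, Fintype.card_prod, Fintype.card_fin, Fintype.card_fin]
  omega

lemma tri_decomp (h3 : 3 ≤ m) (hme : Even m) : TriDecomp (edgeMS (doubleWheel m hm0)) := by
  refine ⟨Finset.univ.val.map (triM hm0), ?_, ?_⟩
  · intro t ht
    rw [Multiset.mem_map] at ht
    obtain ⟨i, -, rfl⟩ := ht
    exact triM_isTriangle hm0 (by omega) i
  · have hsum : ∀ s : Multiset (Fin m), (s.map (triM hm0)).sum =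
        s.map (cycE hm0) + (s.map (fun i => spkE (nextFin hm0 i, parF i)) +
          s.map (fun i => spkE (i, parF i))) := by
      intro s
      induction s using Multiset.induction with
      | empty => simp
      | cons a s ih =>
        rw [Multiset.map_cons, Multiset.sum_cons, ih, Multiset.map_cons, Multiset.map_cons,
          Multiset.map_cons]
        show triM hm0 a + _ = _
        rw [triM]
        simp only [Multiset.insert_eq_cons, ← Multiset.singleton_add]
        abel
    rw [hsum, edgeMS_eq hm0 h3]
    congr 1
    rw [← pair_eq hm0 hme, Multiset.map_add]
    simp only [Multiset.map_map, Function.comp]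
end Tri


/-- For every even `m ≥ 4`, the cycle `C_m` plus two nonadjacent vertices joined to all
cycle vertices is a Hamiltonian, Eulerian (all degrees even) graph on `m + 2` vertices
with exactly `3m = 3(m+2) - 6` edges that is triangle decomposable. -/
theorem doubleWheel_hamiltonian_eulerian_triDecomp (m : ℕ) (hm : 4 ≤ m) (hme : Even m) :
    Fintype.card (Fin m ⊕ Fin 2) = m + 2 ∧
    (doubleWheel m (by omega)).IsHamiltonian ∧
    (∀ v, Even (((doubleWheel m (by omega)).neighborSet v).ncard)) ∧
    (edgeMS (doubleWheel m (by omega))).card = 3 * m ∧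
    3 * m = 3 * (m + 2) - 6 ∧
    TriDecomp (edgeMS (doubleWheel m (by omega))) := by
  refine ⟨by simp, dw_ham _ hm, fun v => dw_even_deg _ hm hme v,
    edgeMS_card _ (by omega), by omega, tri_decomp _ (by omega) hme⟩
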